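/- The ideal hyperbolic Delaunay quantity for an edge and its Ptolemy flip are anti-related: if D(e) = (a²+b²−e²)/(2ab) + (c²+d²−e²)/(2cd) is the Delaunay quantity for edge e, and e' = (ac+bd)/e is the flipped edge (with boundary edges relabeled appropriately as a,d for one triangle and c,b for the other), then D(e) < 0 implies D'(e') > 0, where D'(e') = (a²+d²−e'²)/(2ad) + (c²+b²−e'²)/(2cb). -/
import Mathlib

/-- The ideal hyperbolic Delaunay quantity for an edge and its Ptolemy flip are
anti-related: if the Delaunay quantity of edge `e` is negative, the Delaunay
quantity of the flipped edge `e' = (ac+bd)/e` (in the new triangles `(e',a,d)`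
and `(e',c,b)`) is positive. -/
theorem delaunay_quantity_flip (a b c d e : ℝ)
    (ha : 0 < a) (hb : 0 < b) (hc : 0 < c) (hd : 0 < d) (he : 0 < e)
    (hD : (a ^ 2 + b ^ 2 - e ^ 2) / (2 * a * b) +
          (c ^ 2 + d ^ 2 - e ^ 2) / (2 * c * d) < 0) :
    (a ^ 2 + d ^ 2 - ((a * c + b * d) / e) ^ 2) / (2 * a * d) +
      (c ^ 2 + b ^ 2 - ((a * c + b * d) / e) ^ 2) / (2 * c * b) > 0 := by
  have hkey : (a ^ 2 + d ^ 2 - ((a * c + b * d) / e) ^ 2) / (2 * a * d) +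
      (c ^ 2 + b ^ 2 - ((a * c + b * d) / e) ^ 2) / (2 * c * b)
      = ((a * c + b * d) / e ^ 2) *
        (-((a ^ 2 + b ^ 2 - e ^ 2) / (2 * a * b) +
          (c ^ 2 + d ^ 2 - e ^ 2) / (2 * c * d))) := by
    field_simp
    ring
  rw [hkey]
  apply mul_pos
  · positivity
  · linarith
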